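/- Let Γ=(G,σ) be a weighted signed graph. Then λ₁(L^σ)/2 ≤ h₁^σ(μ₁) ≤ √(2 · d_max · λ₁(L^σ)), where d_max = max_{u∈V} d(u) and μ₁ is the counting measure μ₁(u) = 1 for all u. -/

import Mathlib

open Finset Real

open scoped Classical

noncomputable section

namespace SignedGraph

variable {N : ℕ}

/-- The degree `d(u) = Σ_v w(u,v)` of a vertex. -/
def deg (w : Fin N → Fin N → ℝ) (u : Fin N) : ℝ := ∑ v, w u v

/-- Hypotheses making `(w, sgn)` a weighted signed graph: `w` is a symmetric nonnegative
weight function vanishing on the diagonal and `sgn` is a symmetric `±1`-valued signature. -/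
structure IsWSG {N : ℕ} (w : Fin N → Fin N → ℝ) (sgn : Fin N → Fin N → ℝ) : Prop where
  w_symm : ∀ u v, w u v = w v u
  w_nonneg : ∀ u v, 0 ≤ w u v
  w_loopless : ∀ u, w u u = 0
  sgn_symm : ∀ u v, sgn u v = sgn v u
  sgn_pm : ∀ u v, sgn u v = 1 ∨ sgn u v = -1

/-- The signature obtained from `sgn` by switching with the function `θ : V → {±1}`. -/
def switchSgn (sgn : Fin N → Fin N → ℝ) (θ : Fin N → ℝ) : Fin N → Fin N → ℝ :=
  fun u v => θ u * sgn u v * θ v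

/-- The signed adjacency matrix `A^σ`, `A^σ_{uv} = σ(u,v) w(u,v)`. -/
def adj (w sgn : Fin N → Fin N → ℝ) : Matrix (Fin N) (Fin N) ℝ :=
  Matrix.of fun u v => sgn u v * w u v

/-- The symmetric form `I - D^{-1/2} A^σ D^{-1/2}` of the signed normalized Laplacian,
whose eigenvalues are those of `Δ^σ = I - D^{-1} A^σ`. -/
def nlapSym (w sgn : Fin N → Fin N → ℝ) : Matrix (Fin N) (Fin N) ℝ :=
  Matrix.of fun u v =>
    (if u = v then (1 : ℝ) else 0) -
      sgn u v * w u v / (Real.sqrt (deg w u) * Real.sqrt (deg w v))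

/-- The signed (Kirchhoff) Laplacian `L^σ = D - A^σ`. -/
def lap (w sgn : Fin N → Fin N → ℝ) : Matrix (Fin N) (Fin N) ℝ :=
  Matrix.diagonal (deg w) - adj w sgn

/-- The nondecreasing enumeration of the eigenvalues (with multiplicity) of a real
symmetric matrix; junk value `0` if the matrix is not symmetric.  `evals M ⟨k-1,_⟩`
is the `k`-th smallest eigenvalue `λ_k(M)`. -/
def evals (M : Matrix (Fin N) (Fin N) ℝ) : Fin N → ℝ :=
  if h : M.IsHermitian then (fun i => h.eigenvalues (Tuple.sort h.eigenvalues i)) else 0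

/-- `|E(S,T)| = Σ_{u∈S, v∈T} w(u,v)`. -/
def EE (w : Fin N → Fin N → ℝ) (S T : Finset (Fin N)) : ℝ := ∑ u ∈ S, ∑ v ∈ T, w u v

/-- `|E⁺(S,T)|`: total weight of positive edges from `S` to `T`. -/
def Epos (w sgn : Fin N → Fin N → ℝ) (S T : Finset (Fin N)) : ℝ :=
  ∑ u ∈ S, ∑ v ∈ T, if sgn u v = 1 then w u v else 0

/-- `|E⁻(S,T)|`: total weight of negative edges from `S` to `T`. -/
def Eneg (w sgn : Fin N → Fin N → ℝ) (S T : Finset (Fin N)) : ℝ :=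
  ∑ u ∈ S, ∑ v ∈ T, if sgn u v = -1 then w u v else 0

/-- `vol_μ(S) = Σ_{u∈S} μ(u)`. -/
def vol (μ : Fin N → ℝ) (S : Finset (Fin N)) : ℝ := ∑ u ∈ S, μ u

/-- The signed bipartiteness ratio `β^σ(V₁,V₂)`. -/
def betaR (w sgn : Fin N → Fin N → ℝ) (μ : Fin N → ℝ) (V1 V2 : Finset (Fin N)) : ℝ :=
  (2 * Epos w sgn V1 V2 + Eneg w sgn V1 V1 + Eneg w sgn V2 V2 +
      EE w (V1 ∪ V2) (V1 ∪ V2)ᶜ) / vol μ (V1 ∪ V2)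

/-- The signed Cheeger constant `h₁^σ(μ)`: the minimum of `β^σ(V₁,V₂)` over all pairs of
disjoint subsets with nonempty union. -/
def h1 (w sgn : Fin N → Fin N → ℝ) (μ : Fin N → ℝ) : ℝ :=
  sInf {x | ∃ V1 V2 : Finset (Fin N),
    Disjoint V1 V2 ∧ (V1 ∪ V2).Nonempty ∧ x = betaR w sgn μ V1 V2}

lemma dp_inner (x y : EuclideanSpace ℝ (Fin N)) : (inner ℝ x y : ℝ) = ∑ u, x u * y u := by
  simp [PiLp.inner_apply, RCLike.inner_apply, starRingEnd_apply]
  exact Finset.sum_congr rfl fun u _ => mul_comm _ _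

lemma lap_isHermitian (w sgn : Fin N → Fin N → ℝ) (hG : IsWSG w sgn) :
    (lap w sgn).IsHermitian := by
  unfold Matrix.IsHermitian
  ext u v
  simp only [Matrix.conjTranspose_apply, lap, adj, Matrix.sub_apply, Matrix.diagonal_apply,
    Matrix.of_apply, star_trivial]
  rw [hG.w_symm v u, hG.sgn_symm v u]
  rcases eq_or_ne u v with h | h
  · subst h; simp
  · simp [h, Ne.symm h]

lemma mulVec_symm_comm (M : Matrix (Fin N) (Fin N) ℝ) (h : M.IsHermitian)
    (x y : Fin N → ℝ) :
    ∑ u, y u * M.mulVec x u = ∑ u, (M.mulVec y) u * x u := by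
  simp only [Matrix.mulVec, dotProduct, Finset.mul_sum, Finset.sum_mul]
  rw [Finset.sum_comm]
  refine Finset.sum_congr rfl fun u _ => Finset.sum_congr rfl fun v _ => ?_
  have : M u v = M v u := by
    have := congrFun (congrFun h v) u
    simpa [Matrix.conjTranspose_apply] using this
  rw [this]; ring

lemma evals_zero_le (M : Matrix (Fin N) (Fin N) ℝ) (h : M.IsHermitian) (hN : 0 < N) (i : Fin N) :
    evals M ⟨0, hN⟩ ≤ h.eigenvalues i := by
  rw [evals, dif_pos h]
  have hm := Tuple.monotone_sort h.eigenvalues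
  have : (⟨0, hN⟩ : Fin N) ≤ (Tuple.sort h.eigenvalues).symm i := by
    rw [Fin.le_def]; exact Nat.zero_le _
  have h2 := hm this
  simpa using h2

lemma rayleigh_min (M : Matrix (Fin N) (Fin N) ℝ) (h : M.IsHermitian) (hN : 0 < N)
    (x : Fin N → ℝ) :
    evals M ⟨0, hN⟩ * ∑ u, x u ^ 2 ≤ ∑ u, x u * (M.mulVec x) u := by
  classical
  set b := h.eigenvectorBasis with hb
  set x' : EuclideanSpace ℝ (Fin N) := WithLp.toLp 2 x with hx'
  have key : ∀ i, (inner ℝ (b i) (WithLp.toLp 2 (M.mulVec x) : EuclideanSpace ℝ (Fin N)) : ℝ)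
      = h.eigenvalues i * inner ℝ (b i) x' := by
    intro i
    have hmv : ∀ u, M.mulVec (b i) u = h.eigenvalues i * b i u := fun u => by
      have := congrFun (h.mulVec_eigenvectorBasis i) u
      simpa using this
    rw [dp_inner, dp_inner]
    show ∑ u, (b i) u * (M.mulVec x) u = h.eigenvalues i * ∑ u, (b i) u * x u
    rw [mulVec_symm_comm M h x (b i)]
    rw [Finset.mul_sum]
    refine Finset.sum_congr rfl fun u _ => ?_
    rw [hmv u]; ring
  have parse1 : (inner ℝ x' (WithLp.toLp 2 (M.mulVec x) : EuclideanSpace ℝ (Fin N)) : ℝ)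
      = ∑ i, (inner ℝ x' (b i) : ℝ) * inner ℝ (b i) (WithLp.toLp 2 (M.mulVec x) : EuclideanSpace ℝ (Fin N)) :=
    (b.sum_inner_mul_inner x' _).symm
  have parse2 : (inner ℝ x' x' : ℝ) = ∑ i, (inner ℝ x' (b i) : ℝ) * inner ℝ (b i) x' :=
    (b.sum_inner_mul_inner x' x').symm
  have hsym : ∀ i, (inner ℝ x' (b i) : ℝ) = inner ℝ (b i) x' := fun i => real_inner_comm _ _
  have e1 : ∑ u, x u * (M.mulVec x) u = ∑ i, h.eigenvalues i * (inner ℝ (b i) x' : ℝ)^2 := by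
    have e0 : ∑ u, x u * (M.mulVec x) u
        = (inner ℝ x' (WithLp.toLp 2 (M.mulVec x) : EuclideanSpace ℝ (Fin N)) : ℝ) := by
      rw [dp_inner]
    rw [e0, parse1]
    refine Finset.sum_congr rfl fun i _ => ?_
    rw [key i, hsym i]; ring
  have e2 : ∑ u, x u ^ 2 = ∑ i, (inner ℝ (b i) x' : ℝ)^2 := by
    have : ∑ u, x u ^ 2 = (inner ℝ x' x' : ℝ) := by
      rw [dp_inner]; exact Finset.sum_congr rfl (fun u _ => by rw [hx']; simp; ring)
    rw [this, parse2]
    exact Finset.sum_congr rfl fun i _ => by rw [hsym i]; ring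
  rw [e1, e2, Finset.mul_sum]
  refine Finset.sum_le_sum fun i _ => ?_
  exact mul_le_mul_of_nonneg_right (evals_zero_le M h hN i) (sq_nonneg _)

lemma exists_eigvec (M : Matrix (Fin N) (Fin N) ℝ) (h : M.IsHermitian) (hN : 0 < N) :
    ∃ f : Fin N → ℝ, (∑ u, f u ^ 2 = 1) ∧ M.mulVec f = evals M ⟨0, hN⟩ • f := by
  refine ⟨h.eigenvectorBasis (Tuple.sort h.eigenvalues ⟨0, hN⟩), ?_, ?_⟩
  · have := orthonormal_iff_ite.mp h.eigenvectorBasis.orthonormal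
      (Tuple.sort h.eigenvalues ⟨0, hN⟩) (Tuple.sort h.eigenvalues ⟨0, hN⟩)
    rw [if_pos rfl, dp_inner] at this
    rw [← this]
    exact Finset.sum_congr rfl fun u _ => by ring
  · rw [evals, dif_pos h]
    exact h.mulVec_eigenvectorBasis _

lemma qf (w sgn : Fin N → Fin N → ℝ) (hG : IsWSG w sgn) (x : Fin N → ℝ) :
    ∑ u, x u * (lap w sgn).mulVec x u
      = (1/2) * ∑ u, ∑ v, w u v * (x u - sgn u v * x v)^2 := by
  have h1 : ∀ u, (lap w sgn).mulVec x u
      = (∑ v, w u v) * x u - ∑ v, sgn u v * w u v * x v := by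
    intro u
    have hent : ∀ v, (lap w sgn) u v = (if u = v then deg w u else 0) - sgn u v * w u v :=
      fun v => by simp [lap, adj, Matrix.diagonal_apply, Matrix.sub_apply]
    calc (lap w sgn).mulVec x u
        = ∑ v, ((if u = v then deg w u else 0) - sgn u v * w u v) * x v := by
          simp only [Matrix.mulVec, dotProduct]
          exact Finset.sum_congr rfl fun v _ => by rw [hent v]
      _ = (∑ v, (if u = v then deg w u * x v else 0)) - ∑ v, sgn u v * w u v * x v := by
          rw [← Finset.sum_sub_distrib]
          exact Finset.sum_congr rfl fun v _ => by split_ifs <;> ring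
      _ = (∑ v, w u v) * x u - ∑ v, sgn u v * w u v * x v := by
          rw [Finset.sum_ite_eq, if_pos (Finset.mem_univ u), deg]
  have hLHS : ∑ u, x u * (lap w sgn).mulVec x u
      = ∑ u, ∑ v, (w u v * x u^2 - sgn u v * w u v * (x u * x v)) := by
    refine Finset.sum_congr rfl fun u _ => ?_
    rw [h1 u, Finset.sum_mul, mul_sub, Finset.mul_sum, Finset.mul_sum,
      ← Finset.sum_sub_distrib]
    exact Finset.sum_congr rfl fun v _ => by ring
  have hexp : ∀ u v, w u v * (x u - sgn u v * x v)^2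
      = (w u v * x u^2 - sgn u v * w u v * (x u * x v))
        + (w u v * x v^2 - sgn u v * w u v * (x u * x v)) := by
    intro u v; rcases hG.sgn_pm u v with h | h <;> rw [h] <;> ring
  have hsplit : ∑ u, ∑ v, w u v * (x u - sgn u v * x v)^2
      = (∑ u, ∑ v, (w u v * x u^2 - sgn u v * w u v * (x u * x v)))
        + ∑ u, ∑ v, (w u v * x v^2 - sgn u v * w u v * (x u * x v)) := by
    rw [← Finset.sum_add_distrib]
    refine Finset.sum_congr rfl fun u _ => ?_
    rw [← Finset.sum_add_distrib]
    exact Finset.sum_congr rfl fun v _ => hexp u v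
  have hA' : ∑ u, ∑ v, (w u v * x v^2 - sgn u v * w u v * (x u * x v))
      = ∑ u, ∑ v, (w u v * x u^2 - sgn u v * w u v * (x u * x v)) := by
    rw [Finset.sum_comm]
    refine Finset.sum_congr rfl fun u _ => Finset.sum_congr rfl fun v _ => ?_
    rw [hG.w_symm v u, hG.sgn_symm v u]; ring
  rw [hLHS, hsplit, hA']; ring

/-- indicator-style double sum -/
lemma sum_indicator₂ (S T : Finset (Fin N)) (F : Fin N → Fin N → ℝ) :
    ∑ u, ∑ v, (if u ∈ S ∧ v ∈ T then F u v else 0) = ∑ u ∈ S, ∑ v ∈ T, F u v := by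
  classical
  calc ∑ u, ∑ v, (if u ∈ S ∧ v ∈ T then F u v else 0)
      = ∑ u, if u ∈ S then ∑ v, (if v ∈ T then F u v else 0) else 0 := by
        refine Finset.sum_congr rfl fun u _ => ?_
        by_cases h : u ∈ S <;> simp [h]
    _ = ∑ u ∈ S, ∑ v ∈ T, F u v := by
        rw [Finset.sum_ite_mem, Finset.univ_inter]
        exact Finset.sum_congr rfl fun u _ => by rw [Finset.sum_ite_mem, Finset.univ_inter]

/-- the per-ordered-pair contribution to the numerator of `betaR` -/
def gfun (w sgn : Fin N → Fin N → ℝ) (V1 V2 : Finset (Fin N)) (u v : Fin N) : ℝ :=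
  (if u ∈ V1 ∧ v ∈ V2 ∧ sgn u v = 1 then w u v else 0)
  + (if u ∈ V2 ∧ v ∈ V1 ∧ sgn u v = 1 then w u v else 0)
  + (if u ∈ V1 ∧ v ∈ V1 ∧ sgn u v = -1 then w u v else 0)
  + (if u ∈ V2 ∧ v ∈ V2 ∧ sgn u v = -1 then w u v else 0)
  + (1/2) * (if u ∈ V1 ∪ V2 ∧ v ∉ V1 ∪ V2 then w u v else 0)
  + (1/2) * (if u ∉ V1 ∪ V2 ∧ v ∈ V1 ∪ V2 then w u v else 0)

lemma num_eq (w sgn : Fin N → Fin N → ℝ) (hG : IsWSG w sgn) (V1 V2 : Finset (Fin N)) :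
    2 * Epos w sgn V1 V2 + Eneg w sgn V1 V1 + Eneg w sgn V2 V2
        + EE w (V1 ∪ V2) (V1 ∪ V2)ᶜ
      = ∑ u, ∑ v, gfun w sgn V1 V2 u v := by
  classical
  have key : ∀ (S T : Finset (Fin N)) (P : Fin N → Fin N → Prop) [DecidablePred fun p : Fin N × Fin N => P p.1 p.2],
      True := fun _ _ _ => trivial
  have e1 : ∑ u, ∑ v, (if u ∈ V1 ∧ v ∈ V2 ∧ sgn u v = 1 then w u v else 0)
      = Epos w sgn V1 V2 := by
    calc ∑ u, ∑ v, (if u ∈ V1 ∧ v ∈ V2 ∧ sgn u v = 1 then w u v else 0)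
        = ∑ u, ∑ v, (if u ∈ V1 ∧ v ∈ V2 then (if sgn u v = 1 then w u v else 0) else 0) := by
          refine Finset.sum_congr rfl fun u _ => Finset.sum_congr rfl fun v _ => ?_
          split_ifs <;> simp_all
      _ = Epos w sgn V1 V2 := sum_indicator₂ _ _ _
  have e2 : ∑ u, ∑ v, (if u ∈ V2 ∧ v ∈ V1 ∧ sgn u v = 1 then w u v else 0)
      = Epos w sgn V1 V2 := by
    rw [← e1, Finset.sum_comm]
    refine Finset.sum_congr rfl fun u _ => Finset.sum_congr rfl fun v _ => ?_
    rw [hG.w_symm v u, hG.sgn_symm v u]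
    exact if_congr (by tauto) rfl rfl
  have e3 : ∑ u, ∑ v, (if u ∈ V1 ∧ v ∈ V1 ∧ sgn u v = -1 then w u v else 0)
      = Eneg w sgn V1 V1 := by
    calc ∑ u, ∑ v, (if u ∈ V1 ∧ v ∈ V1 ∧ sgn u v = -1 then w u v else 0)
        = ∑ u, ∑ v, (if u ∈ V1 ∧ v ∈ V1 then (if sgn u v = -1 then w u v else 0) else 0) := by
          refine Finset.sum_congr rfl fun u _ => Finset.sum_congr rfl fun v _ => ?_
          split_ifs <;> simp_all
      _ = Eneg w sgn V1 V1 := sum_indicator₂ _ _ _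
  have e4 : ∑ u, ∑ v, (if u ∈ V2 ∧ v ∈ V2 ∧ sgn u v = -1 then w u v else 0)
      = Eneg w sgn V2 V2 := by
    calc ∑ u, ∑ v, (if u ∈ V2 ∧ v ∈ V2 ∧ sgn u v = -1 then w u v else 0)
        = ∑ u, ∑ v, (if u ∈ V2 ∧ v ∈ V2 then (if sgn u v = -1 then w u v else 0) else 0) := by
          refine Finset.sum_congr rfl fun u _ => Finset.sum_congr rfl fun v _ => ?_
          split_ifs <;> simp_all
      _ = Eneg w sgn V2 V2 := sum_indicator₂ _ _ _
  have e5 : ∑ u, ∑ v, (if u ∈ V1 ∪ V2 ∧ v ∉ V1 ∪ V2 then w u v else 0)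
      = EE w (V1 ∪ V2) (V1 ∪ V2)ᶜ := by
    calc ∑ u, ∑ v, (if u ∈ V1 ∪ V2 ∧ v ∉ V1 ∪ V2 then w u v else 0)
        = ∑ u, ∑ v, (if u ∈ V1 ∪ V2 ∧ v ∈ (V1 ∪ V2)ᶜ then w u v else 0) := by
          refine Finset.sum_congr rfl fun u _ => Finset.sum_congr rfl fun v _ =>
            if_congr (by simp [Finset.mem_compl]) rfl rfl
      _ = EE w (V1 ∪ V2) (V1 ∪ V2)ᶜ := sum_indicator₂ _ _ _
  have e6 : ∑ u, ∑ v, (if u ∉ V1 ∪ V2 ∧ v ∈ V1 ∪ V2 then w u v else 0)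
      = EE w (V1 ∪ V2) (V1 ∪ V2)ᶜ := by
    rw [← e5, Finset.sum_comm]
    refine Finset.sum_congr rfl fun u _ => Finset.sum_congr rfl fun v _ => ?_
    rw [hG.w_symm v u]
    exact if_congr (by tauto) rfl rfl
  have : ∑ u, ∑ v, gfun w sgn V1 V2 u v
      = (∑ u, ∑ v, (if u ∈ V1 ∧ v ∈ V2 ∧ sgn u v = 1 then w u v else 0))
      + (∑ u, ∑ v, (if u ∈ V2 ∧ v ∈ V1 ∧ sgn u v = 1 then w u v else 0))
      + (∑ u, ∑ v, (if u ∈ V1 ∧ v ∈ V1 ∧ sgn u v = -1 then w u v else 0))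
      + (∑ u, ∑ v, (if u ∈ V2 ∧ v ∈ V2 ∧ sgn u v = -1 then w u v else 0))
      + (1/2) * (∑ u, ∑ v, (if u ∈ V1 ∪ V2 ∧ v ∉ V1 ∪ V2 then w u v else 0))
      + (1/2) * (∑ u, ∑ v, (if u ∉ V1 ∪ V2 ∧ v ∈ V1 ∪ V2 then w u v else 0)) := by
    simp only [gfun, Finset.sum_add_distrib, Finset.mul_sum]
  rw [this, e1, e2, e3, e4, e5, e6]; ring

lemma dir1_pair (w sgn : Fin N → Fin N → ℝ) (hG : IsWSG w sgn)
    (V1 V2 : Finset (Fin N)) (hdisj : Disjoint V1 V2) (u v : Fin N) :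
    (1/2) * (w u v * (((if u ∈ V1 then (1:ℝ) else 0) - (if u ∈ V2 then 1 else 0))
        - sgn u v * ((if v ∈ V1 then (1:ℝ) else 0) - (if v ∈ V2 then 1 else 0)))^2)
      ≤ 2 * gfun w sgn V1 V2 u v := by
  have hu : ¬(u ∈ V1 ∧ u ∈ V2) := fun ⟨a, b⟩ => (Finset.disjoint_left.mp hdisj a) b
  have hv : ¬(v ∈ V1 ∧ v ∈ V2) := fun ⟨a, b⟩ => (Finset.disjoint_left.mp hdisj a) b
  have hw := hG.w_nonneg u v
  unfold gfun
  by_cases h1 : u ∈ V1 <;> by_cases h2 : u ∈ V2 <;> by_cases h3 : v ∈ V1 <;>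
    by_cases h4 : v ∈ V2 <;> rcases hG.sgn_pm u v with hs | hs <;>
    simp_all [Finset.mem_union] <;> first | nlinarith [hw] | (norm_num; nlinarith [hw]) | norm_num

lemma vol_one (S : Finset (Fin N)) : vol (fun _ => (1:ℝ)) S = S.card := by
  simp [vol]

lemma dir1 (hN : 0 < N) (w sgn : Fin N → Fin N → ℝ) (hG : IsWSG w sgn)
    (V1 V2 : Finset (Fin N)) (hdisj : Disjoint V1 V2) (hne : (V1 ∪ V2).Nonempty) :
    evals (lap w sgn) ⟨0, hN⟩ / 2 ≤ betaR w sgn (fun _ => 1) V1 V2 := by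
  classical
  set x : Fin N → ℝ := fun u => (if u ∈ V1 then (1:ℝ) else 0) - (if u ∈ V2 then 1 else 0)
    with hx
  have hherm := lap_isHermitian w sgn hG
  have hx2 : ∑ u, x u ^ 2 = ((V1 ∪ V2).card : ℝ) := by
    have hterm : ∀ u, x u ^ 2 = (if u ∈ V1 ∪ V2 then (1:ℝ) else 0) := by
      intro u
      have hu : ¬(u ∈ V1 ∧ u ∈ V2) := fun ⟨a, b⟩ => (Finset.disjoint_left.mp hdisj a) b
      simp only [hx]
      by_cases h1 : u ∈ V1 <;> by_cases h2 : u ∈ V2 <;>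
        simp [h1, h2, Finset.mem_union] <;> exact absurd ⟨h1, h2⟩ hu
    rw [Finset.sum_congr rfl fun u _ => hterm u, Finset.sum_ite_mem, Finset.univ_inter,
      Finset.sum_const, nsmul_eq_mul, mul_one]
  have hray := rayleigh_min (lap w sgn) hherm hN x
  have hqf := qf w sgn hG x
  have hbound : ∑ u, ∑ v, w u v * (x u - sgn u v * x v)^2
      ≤ ∑ u, ∑ v, 2 * (2 * gfun w sgn V1 V2 u v) := by
    refine Finset.sum_le_sum fun u _ => Finset.sum_le_sum fun v _ => ?_
    have := dir1_pair w sgn hG V1 V2 hdisj u v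
    simp only [hx]
    linarith
  have hnum := num_eq w sgn hG V1 V2
  set num := 2 * Epos w sgn V1 V2 + Eneg w sgn V1 V1 + Eneg w sgn V2 V2
      + EE w (V1 ∪ V2) (V1 ∪ V2)ᶜ with hnumdef
  have hineq : evals (lap w sgn) ⟨0, hN⟩ * ((V1 ∪ V2).card : ℝ) ≤ 2 * num := by
    have h4 : ∑ u, ∑ v, 2 * (2 * gfun w sgn V1 V2 u v) = 4 * num := by
      rw [hnum]; rw [Finset.mul_sum]
      exact Finset.sum_congr rfl fun u _ => by rw [Finset.mul_sum]; exact Finset.sum_congr rfl fun v _ => by ring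
    calc evals (lap w sgn) ⟨0, hN⟩ * ((V1 ∪ V2).card : ℝ)
        = evals (lap w sgn) ⟨0, hN⟩ * ∑ u, x u ^ 2 := by rw [hx2]
      _ ≤ ∑ u, x u * (lap w sgn).mulVec x u := hray
      _ = (1/2) * ∑ u, ∑ v, w u v * (x u - sgn u v * x v)^2 := hqf
      _ ≤ (1/2) * (4 * num) := by rw [← h4]; linarith [hbound]
      _ = 2 * num := by ring
  have hcard : (0:ℝ) < ((V1 ∪ V2).card : ℝ) := by
    exact_mod_cast Finset.card_pos.mpr hne
  rw [betaR, vol_one, ← hnumdef]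
  rw [div_le_div_iff₀ (by norm_num) hcard]
  linarith

open MeasureTheory in
lemma chi_integrableOn (r B c : ℝ) :
    IntegrableOn (fun t => if t ≤ r then c else 0) (Set.Ioc (0:ℝ) B) := by
  have h : (fun t : ℝ => if t ≤ r then c else 0) = (Set.Iic r).indicator (fun _ => c) := by
    funext t; simp [Set.indicator, Set.mem_Iic]
  rw [h]
  exact (integrableOn_const measure_Ioc_lt_top.ne).indicator measurableSet_Iic

open MeasureTheory in
lemma chi_integral (B r : ℝ) (h0 : 0 ≤ r) (hB : r ≤ B) :
    ∫ t in Set.Ioc (0:ℝ) B, (if t ≤ r then (1:ℝ) else 0) = r := by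
  have h : (fun t : ℝ => if t ≤ r then (1:ℝ) else 0) = (Set.Iic r).indicator (fun _ => 1) := by
    funext t; simp [Set.indicator, Set.mem_Iic]
  rw [h, setIntegral_indicator measurableSet_Iic, setIntegral_const]
  have h2 : Set.Ioc (0:ℝ) B ∩ Set.Iic r = Set.Ioc 0 r := by
    ext t
    simp only [Set.mem_inter_iff, Set.mem_Ioc, Set.mem_Iic]
    exact ⟨fun ⟨⟨a, _⟩, c⟩ => ⟨a, c⟩, fun ⟨a, c⟩ => ⟨⟨a, le_trans c hB⟩, c⟩⟩
  rw [h2, measureReal_def, Real.volume_Ioc, smul_eq_mul, mul_one, ENNReal.toReal_ofReal (by linarith)]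
  ring

open MeasureTheory in
lemma comb_integrable (B r1 r2 r3 c1 c2 c3 : ℝ) :
    IntegrableOn (fun t => c1 * (if t ≤ r1 then (1:ℝ) else 0)
      + c2 * (if t ≤ r2 then (1:ℝ) else 0) + c3 * (if t ≤ r3 then (1:ℝ) else 0))
      (Set.Ioc (0:ℝ) B) :=
  (((chi_integrableOn r1 B 1).const_mul c1).add
    ((chi_integrableOn r2 B 1).const_mul c2)).add ((chi_integrableOn r3 B 1).const_mul c3)

open MeasureTheory in
lemma comb_integral (B r1 r2 r3 c1 c2 c3 : ℝ) (h1 : 0 ≤ r1) (h1B : r1 ≤ B)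
    (h2 : 0 ≤ r2) (h2B : r2 ≤ B) (h3 : 0 ≤ r3) (h3B : r3 ≤ B) :
    ∫ t in Set.Ioc (0:ℝ) B, (c1 * (if t ≤ r1 then (1:ℝ) else 0)
      + c2 * (if t ≤ r2 then (1:ℝ) else 0) + c3 * (if t ≤ r3 then (1:ℝ) else 0))
      = c1 * r1 + c2 * r2 + c3 * r3 := by
  have i1 := (chi_integrableOn r1 B 1).const_mul c1
  have i2 := (chi_integrableOn r2 B 1).const_mul c2
  have i3 := (chi_integrableOn r3 B 1).const_mul c3
  have e3 := integral_add (i1.add i2) i3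
  simp only [Pi.add_apply] at e3
  have e2 := integral_add i1 i2
  rw [e3, e2, integral_const_mul, integral_const_mul, integral_const_mul,
    chi_integral B r1 h1 h1B, chi_integral B r2 h2 h2B, chi_integral B r3 h3 h3B]

lemma key_ineq (a b s c : ℝ) (hs : s = 1 ∨ s = -1) (hc : c = 1 ∨ c = 0)
    (himp : c = 1 → s * a * b ≤ 0) :
    c * min (a^2) (b^2)
        + (1/2) * (a^2 - min (a^2) (b^2)) + (1/2) * (b^2 - min (a^2) (b^2))
      ≤ (1/2) * (|a - s * b| * (|a| + |b|)) := by
  have habs1 : |a - s * b| ≤ |a| + |b| := by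
    rcases hs with h | h <;> subst h
    · simpa using abs_sub a b
    · simpa using abs_add_le a b
  rcases hc with hc | hc <;> subst hc
  · have hsab := himp rfl
    have h2 : a^2 + b^2 ≤ (a - s*b)^2 := by
      rcases hs with h | h <;> subst h <;> nlinarith
    have h3 : (a - s*b)^2 ≤ |a - s*b| * (|a| + |b|) := by
      rw [← sq_abs, sq]
      exact mul_le_mul_of_nonneg_left habs1 (abs_nonneg _)
    linarith
  · have e : a^2 - b^2 = (a - s*b) * (a + s*b) := by
      rcases hs with h | h <;> subst h <;> ring
    have h4 : |a + s*b| ≤ |a| + |b| := by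
      rcases hs with h | h <;> subst h
      · simpa using abs_add_le a b
      · simpa [← sub_eq_add_neg] using abs_sub a b
    have h5 : |a^2 - b^2| = |a - s*b| * |a + s*b| := by rw [e, abs_mul]
    have h6 : a^2 + b^2 - 2 * min (a^2) (b^2) = |a^2 - b^2| := by
      rcases le_total (a^2) (b^2) with h | h
      · rw [min_eq_left h, abs_of_nonpos (by linarith)]; ring
      · rw [min_eq_right h, abs_of_nonneg (by linarith)]; ring
    have h7 : |a - s*b| * |a + s*b| ≤ |a - s*b| * (|a| + |b|) :=
      mul_le_mul_of_nonneg_left h4 (abs_nonneg _)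
    linarith

lemma betaR_nonneg (w sgn : Fin N → Fin N → ℝ) (hG : IsWSG w sgn) (V1 V2 : Finset (Fin N)) :
    0 ≤ betaR w sgn (fun _ => 1) V1 V2 := by
  have key : ∀ (A B : Finset (Fin N)) (F : Fin N → Fin N → ℝ), (∀ u v, 0 ≤ F u v) →
      0 ≤ ∑ u ∈ A, ∑ v ∈ B, F u v := fun A B F h =>
    Finset.sum_nonneg fun u _ => Finset.sum_nonneg fun v _ => h u v
  unfold betaR Epos Eneg EE
  apply div_nonneg
  · have h1 := key V1 V2 (fun u v => if sgn u v = 1 then w u v else 0)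
      (fun u v => by split_ifs; exacts [hG.w_nonneg u v, le_rfl])
    have h2 := key V1 V1 (fun u v => if sgn u v = -1 then w u v else 0)
      (fun u v => by split_ifs; exacts [hG.w_nonneg u v, le_rfl])
    have h3 := key V2 V2 (fun u v => if sgn u v = -1 then w u v else 0)
      (fun u v => by split_ifs; exacts [hG.w_nonneg u v, le_rfl])
    have h4 := key (V1 ∪ V2) (V1 ∪ V2)ᶜ w (fun u v => hG.w_nonneg u v)
    linarith
  · rw [vol_one]; positivity

set_option maxHeartbeats 1600000 in
lemma pair_eq_lemma (w sgn : Fin N → Fin N → ℝ) (f : Fin N → ℝ) (hG : IsWSG w sgn)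
    (t : ℝ) (ht0 : 0 < t) (u v : Fin N) :
    gfun w sgn (Finset.univ.filter (fun z => 0 < f z ∧ t ≤ f z ^ 2))
        (Finset.univ.filter (fun z => f z < 0 ∧ t ≤ f z ^ 2)) u v
      = (w u v * ((if (sgn u v = 1 ∧ (0 < f u ∧ f v < 0 ∨ f u < 0 ∧ 0 < f v))
            ∨ (sgn u v = -1 ∧ (0 < f u ∧ 0 < f v ∨ f u < 0 ∧ f v < 0)) then (1:ℝ) else 0) - 1))
          * (if t ≤ min (f u ^ 2) (f v ^ 2) then (1:ℝ) else 0)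
        + (w u v / 2) * (if t ≤ f u ^ 2 then (1:ℝ) else 0)
        + (w u v / 2) * (if t ≤ f v ^ 2 then (1:ℝ) else 0) := by
  simp only [gfun, Finset.mem_union, Finset.mem_filter, Finset.mem_univ, true_and, le_min_iff]
  by_cases ha1 : 0 < f u <;> by_cases ha2 : f u < 0 <;>
    by_cases hb1 : 0 < f v <;> by_cases hb2 : f v < 0 <;>
    (try exact absurd ha2 (not_lt.mpr ha1.le)) <;>
    (try exact absurd hb2 (not_lt.mpr hb1.le)) <;>
    by_cases hA : t ≤ f u ^ 2 <;> by_cases hB : t ≤ f v ^ 2 <;>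
    (try exact absurd hA (by rw [le_antisymm (not_lt.1 ha1) (not_lt.1 ha2)]; simpa using ht0)) <;>
    (try exact absurd hB (by rw [le_antisymm (not_lt.1 hb1) (not_lt.1 hb2)]; simpa using ht0)) <;>
    rcases hG.sgn_pm u v with hs | hs <;>
    simp [hs, ha1, ha2, hb1, hb2, hA, hB,
      (by norm_num : ¬((1:ℝ) = -1)), (by norm_num : ¬((-1:ℝ) = 1))] <;>
    ring

set_option maxHeartbeats 1000000 in
open MeasureTheory in
lemma dir2 (hN : 0 < N) (w sgn : Fin N → Fin N → ℝ) (hG : IsWSG w sgn)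
    (hd : ∀ u, 0 < deg w u) :
    h1 w sgn (fun _ => 1) ≤ Real.sqrt (2 * (⨆ u, deg w u) * evals (lap w sgn) ⟨0, hN⟩) := by
  classical
  set lam := evals (lap w sgn) ⟨0, hN⟩ with hlam
  obtain ⟨f, hf1, hfeig⟩ := exists_eigvec (lap w sgn) (lap_isHermitian w sgn hG) hN
  have hqf := qf w sgn hG f
  have hfl : ∑ u, f u * (lap w sgn).mulVec f u = lam := by
    rw [hfeig]
    have h : ∑ u, f u * (lam • f) u = lam * ∑ u, f u ^ 2 := by
      rw [Finset.mul_sum]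
      exact Finset.sum_congr rfl fun u _ => by simp [Pi.smul_apply]; ring
    rw [h, hf1, mul_one]
  have hSigma1 : ∑ u, ∑ v, w u v * (f u - sgn u v * f v)^2 = 2 * lam := by
    rw [← hfl, hqf]; ring
  have hlam0 : 0 ≤ lam := by
    have h : 0 ≤ ∑ u, ∑ v, w u v * (f u - sgn u v * f v)^2 :=
      Finset.sum_nonneg fun u _ => Finset.sum_nonneg fun v _ =>
        mul_nonneg (hG.w_nonneg u v) (sq_nonneg _)
    linarith
  set dmax := ⨆ u, deg w u with hdmax
  have hdmax_le : ∀ u, deg w u ≤ dmax :=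
    fun u => le_ciSup (Set.Finite.bddAbove (Set.finite_range (deg w))) u
  have hdmax0 : 0 < dmax := lt_of_lt_of_le (hd ⟨0, hN⟩) (hdmax_le _)
  set C := Real.sqrt (2 * dmax * lam) with hC
  by_contra hcon
  push_neg at hcon
  have hbdd : BddBelow {x | ∃ V1 V2 : Finset (Fin N),
      Disjoint V1 V2 ∧ (V1 ∪ V2).Nonempty ∧ x = betaR w sgn (fun _ => 1) V1 V2} := by
    refine ⟨0, fun y hy => ?_⟩
    obtain ⟨V1, V2, _, _, rfl⟩ := hy
    exact betaR_nonneg w sgn hG V1 V2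
  have hall : ∀ V1 V2 : Finset (Fin N), Disjoint V1 V2 → (V1 ∪ V2).Nonempty →
      C < betaR w sgn (fun _ => 1) V1 V2 := by
    intro V1 V2 h1' h2'
    have hle := csInf_le hbdd (Set.mem_setOf.mpr ⟨V1, V2, h1', h2', rfl⟩)
    exact lt_of_lt_of_le hcon hle
  obtain ⟨u0, _, hu0⟩ := Finset.exists_max_image Finset.univ (fun u => f u ^ 2)
    ⟨⟨0, hN⟩, Finset.mem_univ _⟩
  set Bv := f u0 ^ 2 with hBv
  have hmax : ∀ u, f u ^ 2 ≤ Bv := fun u => hu0 u (Finset.mem_univ u)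
  have hBpos : 0 < Bv := by
    by_contra hB
    push_neg at hB
    have h : ∑ u, f u ^ 2 ≤ 0 := Finset.sum_nonpos fun u _ => le_trans (hmax u) hB
    rw [hf1] at h; linarith
  set V1t : ℝ → Finset (Fin N) := fun t => Finset.univ.filter (fun u => 0 < f u ∧ t ≤ f u ^ 2)
    with hV1t
  set V2t : ℝ → Finset (Fin N) := fun t => Finset.univ.filter (fun u => f u < 0 ∧ t ≤ f u ^ 2)
    with hV2t
  have hdisjt : ∀ t, Disjoint (V1t t) (V2t t) := by
    intro t
    rw [Finset.disjoint_left]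
    intro a ha hb
    rw [hV1t] at ha; rw [hV2t] at hb
    simp only [Finset.mem_filter] at ha hb
    linarith [ha.2.1, hb.2.1]
  have hmemS : ∀ t u, (u ∈ V1t t ∪ V2t t) ↔ (f u ≠ 0 ∧ t ≤ f u ^ 2) := by
    intro t u
    simp only [Finset.mem_union, hV1t, hV2t, Finset.mem_filter, Finset.mem_univ, true_and]
    constructor
    · rintro (⟨h, c⟩ | ⟨h, c⟩)
      exacts [⟨ne_of_gt h, c⟩, ⟨ne_of_lt h, c⟩]
    · rintro ⟨h, c⟩
      rcases h.lt_or_gt with h | h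
      exacts [Or.inr ⟨h, c⟩, Or.inl ⟨h, c⟩]
  have hnet : ∀ t ∈ Set.Ioc (0:ℝ) Bv, (V1t t ∪ V2t t).Nonempty := by
    intro t ht
    refine ⟨u0, (hmemS t u0).mpr ⟨?_, ht.2⟩⟩
    intro h0
    rw [h0] at hBv
    simp only [hBv] at hBpos
    norm_num at hBpos
  set chi : ℝ → ℝ → ℝ := fun r t => if t ≤ r then (1:ℝ) else 0 with hchi
  set c0 : Fin N → Fin N → ℝ := fun u v =>
    if (sgn u v = 1 ∧ (0 < f u ∧ f v < 0 ∨ f u < 0 ∧ 0 < f v))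
        ∨ (sgn u v = -1 ∧ (0 < f u ∧ 0 < f v ∨ f u < 0 ∧ f v < 0)) then (1:ℝ) else 0
    with hc0
  set mm : Fin N → Fin N → ℝ := fun u v => min (f u ^ 2) (f v ^ 2) with hmm
  set Phi : ℝ → ℝ := fun t => ∑ u, ∑ v,
    ((w u v * (c0 u v - 1)) * chi (mm u v) t
      + (w u v / 2) * chi (f u ^ 2) t + (w u v / 2) * chi (f v ^ 2) t) with hPhi
  set Psi : ℝ → ℝ := fun t => ∑ u, (if f u ≠ 0 then (1:ℝ) else 0) * chi (f u ^ 2) t with hPsi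
  have pair_eq : ∀ u v, ∀ t ∈ Set.Ioc (0:ℝ) Bv,
      gfun w sgn (V1t t) (V2t t) u v
        = (w u v * (c0 u v - 1)) * chi (mm u v) t
          + (w u v / 2) * chi (f u ^ 2) t + (w u v / 2) * chi (f v ^ 2) t := by
    intro u v t ht
    simp only [hchi, hc0, hmm, hV1t, hV2t]
    exact pair_eq_lemma w sgn f hG t ht.1 u v
  have hPsiCard : ∀ t, Psi t = ((V1t t ∪ V2t t).card : ℝ) := by
    intro t
    have h : ((V1t t ∪ V2t t).card : ℝ) = ∑ u, (if u ∈ V1t t ∪ V2t t then (1:ℝ) else 0) := by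
      rw [Finset.sum_ite_mem, Finset.univ_inter, Finset.sum_const, nsmul_eq_mul, mul_one]
    rw [h]
    simp only [hPsi, hchi]
    refine Finset.sum_congr rfl fun u _ => ?_
    by_cases h1 : f u ≠ 0 <;> by_cases h2 : t ≤ f u ^ 2 <;>
      simp [h1, h2, hmemS t u]
  have hPhiNum : ∀ t ∈ Set.Ioc (0:ℝ) Bv,
      Phi t = 2 * Epos w sgn (V1t t) (V2t t) + Eneg w sgn (V1t t) (V1t t)
        + Eneg w sgn (V2t t) (V2t t) + EE w (V1t t ∪ V2t t) (V1t t ∪ V2t t)ᶜ := by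
    intro t ht
    rw [num_eq w sgn hG]
    simp only [hPhi]
    exact Finset.sum_congr rfl fun u _ => Finset.sum_congr rfl fun v _ =>
      (pair_eq u v t ht).symm
  have hPhiIntble : IntegrableOn Phi (Set.Ioc (0:ℝ) Bv) := by
    simp only [hPhi]
    apply integrable_finset_sum
    intro u _
    apply integrable_finset_sum
    intro v _
    exact comb_integrable Bv _ _ _ _ _ _
  have hPsiIntble : IntegrableOn Psi (Set.Ioc (0:ℝ) Bv) := by
    simp only [hPsi]
    apply integrable_finset_sum
    intro u _
    exact (chi_integrableOn _ _ 1).const_mul _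
  have hPsiVal : ∫ t in Set.Ioc (0:ℝ) Bv, Psi t = 1 := by
    simp only [hPsi, hchi]
    rw [integral_finset_sum _ (fun u _ => (chi_integrableOn (f u ^ 2) Bv 1).const_mul _)]
    have hterm : ∀ u, (∫ t in Set.Ioc (0:ℝ) Bv,
        (if f u ≠ 0 then (1:ℝ) else 0) * (if t ≤ f u ^ 2 then (1:ℝ) else 0)) = f u ^ 2 := by
      intro u
      rw [integral_const_mul, chi_integral Bv _ (sq_nonneg _) (hmax u)]
      by_cases hu : f u = 0 <;> simp [hu]
    rw [Finset.sum_congr rfl fun u _ => hterm u, hf1]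
  have hPhiVal : ∫ t in Set.Ioc (0:ℝ) Bv, Phi t ≤ C := by
    have hmm0 : ∀ u v, 0 ≤ mm u v := fun u v => le_min (sq_nonneg _) (sq_nonneg _)
    have hmmB : ∀ u v, mm u v ≤ Bv := fun u v => le_trans (min_le_left _ _) (hmax u)
    have hval : ∫ t in Set.Ioc (0:ℝ) Bv, Phi t
        = ∑ u, ∑ v, ((w u v * (c0 u v - 1)) * mm u v
            + (w u v / 2) * (f u ^ 2) + (w u v / 2) * (f v ^ 2)) := by
      simp only [hPhi, hchi]
      rw [integral_finset_sum _ (fun u _ =>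
        integrable_finset_sum _ (fun v _ => comb_integrable Bv _ _ _ _ _ _))]
      refine Finset.sum_congr rfl fun u _ => ?_
      rw [integral_finset_sum _ (fun v _ => comb_integrable Bv _ _ _ _ _ _)]
      exact Finset.sum_congr rfl fun v _ => comb_integral Bv _ _ _ _ _ _
        (hmm0 u v) (hmmB u v) (sq_nonneg _) (hmax u) (sq_nonneg _) (hmax v)
    have hc0pm : ∀ u v, c0 u v = 1 ∨ c0 u v = 0 := fun u v => by
      simp only [hc0]; split_ifs <;> simp
    have hc0imp : ∀ u v, c0 u v = 1 → sgn u v * f u * f v ≤ 0 := by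
      intro u v h
      simp only [hc0] at h
      split_ifs at h with hcond
      · rcases hcond with ⟨h1', h2' | h2'⟩ | ⟨h1', h2' | h2'⟩ <;> rw [h1'] <;>
          nlinarith [h2'.1, h2'.2]
      · norm_num at h
    have hbound : ∀ u v, (w u v * (c0 u v - 1)) * mm u v
          + (w u v / 2) * (f u ^ 2) + (w u v / 2) * (f v ^ 2)
        ≤ (1/2) * (w u v * (|f u - sgn u v * f v| * (|f u| + |f v|))) := by
      intro u v
      have hk := key_ineq (f u) (f v) (sgn u v) (c0 u v) (hG.sgn_pm u v) (hc0pm u v)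
        (hc0imp u v)
      have hL : (w u v * (c0 u v - 1)) * mm u v
            + (w u v / 2) * (f u ^ 2) + (w u v / 2) * (f v ^ 2)
          = w u v * (c0 u v * min (f u ^ 2) (f v ^ 2)
            + (1/2) * (f u ^ 2 - min (f u ^ 2) (f v ^ 2))
            + (1/2) * (f v ^ 2 - min (f u ^ 2) (f v ^ 2))) := by
        simp only [hmm]; ring
      rw [hL]
      calc w u v * (c0 u v * min (f u ^ 2) (f v ^ 2)
            + (1/2) * (f u ^ 2 - min (f u ^ 2) (f v ^ 2))
            + (1/2) * (f v ^ 2 - min (f u ^ 2) (f v ^ 2)))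
          ≤ w u v * ((1/2) * (|f u - sgn u v * f v| * (|f u| + |f v|))) :=
            mul_le_mul_of_nonneg_left hk (hG.w_nonneg u v)
        _ = (1/2) * (w u v * (|f u - sgn u v * f v| * (|f u| + |f v|))) := by ring
    set T := ∑ u, ∑ v, w u v * (|f u - sgn u v * f v| * (|f u| + |f v|)) with hT
    have hCS : T ≤ Real.sqrt (2 * lam) * Real.sqrt (4 * dmax) := by
      have h1' : ∑ p ∈ (Finset.univ : Finset (Fin N × Fin N)),
          (Real.sqrt (w p.1 p.2) * |f p.1 - sgn p.1 p.2 * f p.2|)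
            * (Real.sqrt (w p.1 p.2) * (|f p.1| + |f p.2|)) = T := by
        rw [hT, ← Finset.univ_product_univ, Finset.sum_product]
        refine Finset.sum_congr rfl fun u _ => Finset.sum_congr rfl fun v _ => ?_
        calc (Real.sqrt (w u v) * |f u - sgn u v * f v|)
              * (Real.sqrt (w u v) * (|f u| + |f v|))
            = (Real.sqrt (w u v) * Real.sqrt (w u v))
              * (|f u - sgn u v * f v| * (|f u| + |f v|)) := by ring
          _ = w u v * (|f u - sgn u v * f v| * (|f u| + |f v|)) := by
              rw [Real.mul_self_sqrt (hG.w_nonneg u v)]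
      have h2' := Real.sum_mul_le_sqrt_mul_sqrt (Finset.univ : Finset (Fin N × Fin N))
        (fun p => Real.sqrt (w p.1 p.2) * |f p.1 - sgn p.1 p.2 * f p.2|)
        (fun p => Real.sqrt (w p.1 p.2) * (|f p.1| + |f p.2|))
      rw [h1'] at h2'
      have e1 : ∑ p ∈ (Finset.univ : Finset (Fin N × Fin N)),
          (Real.sqrt (w p.1 p.2) * |f p.1 - sgn p.1 p.2 * f p.2|) ^ 2 = 2 * lam := by
        rw [← hSigma1, ← Finset.univ_product_univ, Finset.sum_product]
        refine Finset.sum_congr rfl fun u _ => Finset.sum_congr rfl fun v _ => ?_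
        calc (Real.sqrt (w u v) * |f u - sgn u v * f v|) ^ 2
            = (Real.sqrt (w u v) * Real.sqrt (w u v)) * |f u - sgn u v * f v| ^ 2 := by ring
          _ = w u v * (f u - sgn u v * f v) ^ 2 := by
              rw [Real.mul_self_sqrt (hG.w_nonneg u v), sq_abs]
      have split2 : ∀ F G : Fin N → Fin N → ℝ,
          ∑ u, ∑ v, (F u v + G u v) = (∑ u, ∑ v, F u v) + (∑ u, ∑ v, G u v) := by
        intro F G
        rw [← Finset.sum_add_distrib]
        exact Finset.sum_congr rfl fun u _ => Finset.sum_add_distrib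
      have sA : ∑ u, ∑ v, w u v * f u ^ 2 = ∑ u, deg w u * f u ^ 2 := by
        refine Finset.sum_congr rfl fun u _ => ?_
        rw [deg, Finset.sum_mul]
      have sB : ∑ u, ∑ v, w u v * f v ^ 2 = ∑ u, deg w u * f u ^ 2 := by
        rw [Finset.sum_comm]
        refine Finset.sum_congr rfl fun u _ => ?_
        rw [deg, Finset.sum_mul]
        exact Finset.sum_congr rfl fun v _ => by rw [hG.w_symm v u]
      have step3 : ∑ u, deg w u * f u ^ 2 ≤ dmax := by
        calc ∑ u, deg w u * f u ^ 2 ≤ ∑ u, dmax * f u ^ 2 :=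
            Finset.sum_le_sum fun u _ =>
              mul_le_mul_of_nonneg_right (hdmax_le u) (sq_nonneg _)
          _ = dmax := by rw [← Finset.mul_sum, hf1, mul_one]
      have e2 : ∑ p ∈ (Finset.univ : Finset (Fin N × Fin N)),
          (Real.sqrt (w p.1 p.2) * (|f p.1| + |f p.2|)) ^ 2 ≤ 4 * dmax := by
        have stepA : ∑ p ∈ (Finset.univ : Finset (Fin N × Fin N)),
            (Real.sqrt (w p.1 p.2) * (|f p.1| + |f p.2|)) ^ 2
            ≤ ∑ u, ∑ v, (w u v * f u ^ 2 + w u v * f v ^ 2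
              + (w u v * f u ^ 2 + w u v * f v ^ 2)) := by
          rw [← Finset.univ_product_univ, Finset.sum_product]
          refine Finset.sum_le_sum fun u _ => Finset.sum_le_sum fun v _ => ?_
          have hww : (Real.sqrt (w u v) * (|f u| + |f v|)) ^ 2
              = w u v * (|f u| + |f v|) ^ 2 := by
            calc (Real.sqrt (w u v) * (|f u| + |f v|)) ^ 2
                = (Real.sqrt (w u v) * Real.sqrt (w u v)) * (|f u| + |f v|) ^ 2 := by ring
              _ = w u v * (|f u| + |f v|) ^ 2 := by rw [Real.mul_self_sqrt (hG.w_nonneg u v)]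
          rw [hww]
          nlinarith [sq_nonneg (|f u| - |f v|), sq_abs (f u), sq_abs (f v),
            hG.w_nonneg u v, abs_nonneg (f u), abs_nonneg (f v)]
        have stepB : ∑ u, ∑ v, (w u v * f u ^ 2 + w u v * f v ^ 2
              + (w u v * f u ^ 2 + w u v * f v ^ 2)) = 4 * ∑ u, deg w u * f u ^ 2 := by
          rw [split2, split2, sA, sB]
          ring
        rw [stepB] at stepA
        linarith
      calc T ≤ Real.sqrt (∑ p ∈ (Finset.univ : Finset (Fin N × Fin N)),
            (Real.sqrt (w p.1 p.2) * |f p.1 - sgn p.1 p.2 * f p.2|) ^ 2)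
          * Real.sqrt (∑ p ∈ (Finset.univ : Finset (Fin N × Fin N)),
            (Real.sqrt (w p.1 p.2) * (|f p.1| + |f p.2|)) ^ 2) := h2'
        _ ≤ Real.sqrt (2 * lam) * Real.sqrt (4 * dmax) := by
            rw [e1]
            exact mul_le_mul_of_nonneg_left (Real.sqrt_le_sqrt e2) (Real.sqrt_nonneg _)
    have h4 : Real.sqrt (2 * lam) * Real.sqrt (4 * dmax) = 2 * C := by
      rw [hC, ← Real.sqrt_mul (by linarith : (0:ℝ) ≤ 2 * lam),
        show (2 * lam) * (4 * dmax) = 4 * (2 * dmax * lam) by ring,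
        Real.sqrt_mul (by norm_num : (0:ℝ) ≤ 4),
        show (4:ℝ) = 2 ^ 2 by norm_num, Real.sqrt_sq (by norm_num : (0:ℝ) ≤ 2)]
    have hsum : ∑ u, ∑ v, ((w u v * (c0 u v - 1)) * mm u v
          + (w u v / 2) * (f u ^ 2) + (w u v / 2) * (f v ^ 2)) ≤ (1/2) * T := by
      rw [hT, Finset.mul_sum]
      refine Finset.sum_le_sum fun u _ => ?_
      rw [Finset.mul_sum]
      exact Finset.sum_le_sum fun v _ => hbound u v
    rw [hval]
    linarith
  have hpos : ∀ t ∈ Set.Ioc (0:ℝ) Bv, C * Psi t < Phi t := by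
    intro t ht
    have hne := hnet t ht
    have hb := hall (V1t t) (V2t t) (hdisjt t) hne
    rw [betaR, vol_one] at hb
    have hcard : (0:ℝ) < ((V1t t ∪ V2t t).card : ℝ) := by
      exact_mod_cast Finset.card_pos.mpr hne
    rw [hPsiCard t, hPhiNum t ht]
    calc C * ((V1t t ∪ V2t t).card : ℝ)
        < (2 * Epos w sgn (V1t t) (V2t t) + Eneg w sgn (V1t t) (V1t t)
            + Eneg w sgn (V2t t) (V2t t) + EE w (V1t t ∪ V2t t) (V1t t ∪ V2t t)ᶜ) := by
          rw [lt_div_iff₀ hcard] at hb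
          linarith
      _ = _ := by ring
  have hsubI : IntegrableOn (fun t => Phi t - C * Psi t) (Set.Ioc (0:ℝ) Bv) :=
    hPhiIntble.sub (hPsiIntble.const_mul C)
  have hcontra : 0 < ∫ t in Set.Ioc (0:ℝ) Bv, (Phi t - C * Psi t) := by
    rw [setIntegral_pos_iff_support_of_nonneg_ae
      ((ae_restrict_iff' measurableSet_Ioc).mpr (ae_of_all _ fun t ht =>
        sub_nonneg.mpr (hpos t ht).le)) hsubI]
    refine lt_of_lt_of_le ?_ (measure_mono (fun t ht =>
      ⟨ne_of_gt (sub_pos.mpr (hpos t ht)), ht⟩))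
    rw [Real.volume_Ioc]
    exact ENNReal.ofReal_pos.mpr (by linarith)
  have hsplit : ∫ t in Set.Ioc (0:ℝ) Bv, (Phi t - C * Psi t)
      = (∫ t in Set.Ioc (0:ℝ) Bv, Phi t) - C * ∫ t in Set.Ioc (0:ℝ) Bv, Psi t := by
    rw [integral_sub hPhiIntble (hPsiIntble.const_mul C), integral_const_mul]
  rw [hsplit, hPsiVal] at hcontra
  linarith

set_option maxHeartbeats 1000000 in
/-- **non-normalized signed Cheeger inequality.**
`λ₁(L^σ)/2 ≤ h₁^σ(μ₁) ≤ √(2 d_max λ₁(L^σ))`, where `μ₁ ≡ 1`. -/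
theorem signed_cheeger_inequality_nonnormalized {N : ℕ} (hN : 0 < N)
    (w sgn : Fin N → Fin N → ℝ) (hG : IsWSG w sgn) (hd : ∀ u, 0 < deg w u) :
    evals (lap w sgn) ⟨0, hN⟩ / 2 ≤ h1 w sgn (fun _ => 1) ∧
    h1 w sgn (fun _ => 1) ≤
      Real.sqrt (2 * (⨆ u, deg w u) * evals (lap w sgn) ⟨0, hN⟩) := by
  constructor
  · unfold h1
    apply le_csInf
    · exact ⟨_, ⟨{⟨0, hN⟩}, ∅, Finset.disjoint_empty_right _,
        by rw [Finset.union_empty]; exact Finset.singleton_nonempty _, rfl⟩⟩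
    · rintro b ⟨V1, V2, hdisj, hne, rfl⟩
      exact dir1 hN w sgn hG V1 V2 hdisj hne
  · exact dir2 hN w sgn hG hd

end SignedGraph
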